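/- Let A be a connected graph on [n] with weighted Laplacian ℒ(x) (weights bounded as in the contextual BTL model), and define α_{ij}(x) = π_i(x) − π_j(x) with π(x) = 1{x∈Ω}·|A|·ℒ†(x)(e_{i₀} − e_{j₀}). Then the Neyman-orthogonality identity holds: for every x ∈ Ω and every h ∈ ℝⁿ, (1/|A|)·Σ_{(i,j)∈E(A)} α_{ij}(x)·ψ'(θ_i(x) − θ_j(x))·(h_i − h_j) = h_{i₀} − h_{j₀}. -/
import Mathlib

open Matrix BigOperators Classical

/-- The four Penrose conditions characterizing the Moore–Penrose pseudoinverse. -/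
def IsMoorePenrose {n : ℕ} (M Mp : Matrix (Fin n) (Fin n) ℝ) : Prop :=
  M * Mp * M = M ∧ Mp * M * Mp = Mp ∧ (M * Mp)ᵀ = M * Mp ∧ (Mp * M)ᵀ = Mp * M

/-- Derivative of the logistic function: `ψ'(t) = e^{−t}/(1+e^{−t})²`. -/
noncomputable def logisticDeriv (t : ℝ) : ℝ := Real.exp (-t) / (1 + Real.exp (-t)) ^ 2

lemma logisticDeriv_pos (t : ℝ) : 0 < logisticDeriv t := by
  unfold logisticDeriv
  positivity

lemma logisticDeriv_neg (t : ℝ) : logisticDeriv (-t) = logisticDeriv t := by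
  unfold logisticDeriv
  have h1 : Real.exp (-t) = (Real.exp t)⁻¹ := Real.exp_neg t
  have h2 : Real.exp (- -t) = Real.exp t := by rw [neg_neg]
  rw [h1, h2]
  have he : Real.exp t ≠ 0 := (Real.exp_pos t).ne'
  have hd1 : (1 + Real.exp t) ≠ 0 := by positivity
  have hd2 : (1 + (Real.exp t)⁻¹) ≠ 0 := by positivity
  field_simp
  ring

lemma sum_pairs {n : ℕ} (G : Fin n → Fin n → ℝ) (hdiag : ∀ i, G i i = 0) :
    ∑ i, ∑ j, G i j = ∑ i, ∑ j, (if i < j then G i j + G j i else 0) := by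
  have hsplit : ∀ i j : Fin n, G i j =
      (if i < j then G i j else 0) + (if j < i then G i j else 0) := by
    intro i j
    rcases lt_trichotomy i j with hlt | heq | hgt
    · simp [hlt, asymm hlt]
    · subst heq; simp [hdiag, lt_irrefl]
    · simp [hgt, asymm hgt]
  calc ∑ i, ∑ j, G i j
      = ∑ i, ∑ j, ((if i < j then G i j else 0) + (if j < i then G i j else 0)) := by
        simp_rw [← hsplit]
    _ = (∑ i, ∑ j, (if i < j then G i j else 0)) + ∑ i, ∑ j, (if j < i then G i j else 0) := by
        rw [← Finset.sum_add_distrib]; congr 1; ext i; rw [Finset.sum_add_distrib]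
    _ = (∑ i, ∑ j, (if i < j then G i j else 0)) + ∑ i, ∑ j, (if i < j then G j i else 0) := by
        congr 1; rw [Finset.sum_comm]
    _ = ∑ i, ∑ j, (if i < j then G i j + G j i else 0) := by
        rw [← Finset.sum_add_distrib]; congr 1; ext i; rw [← Finset.sum_add_distrib]
        congr 1; ext j; split <;> simp

lemma laplacian_bilinear {n : ℕ} (w : Fin n → Fin n → ℝ)
    (hsym : ∀ i j, w i j = w j i) (p q : Fin n → ℝ) :
    ∑ i, ∑ j, (if i < j then w i j * (p i - p j) * (q i - q j) else 0)
      = p ⬝ᵥ ((Matrix.diagonal (fun i => ∑ j, w i j) - Matrix.of w) *ᵥ q) := by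
  have hrhs : p ⬝ᵥ ((Matrix.diagonal (fun i => ∑ j, w i j) - Matrix.of w) *ᵥ q)
      = ∑ i, ∑ j, w i j * p i * (q i - q j) := by
    simp only [Matrix.sub_mulVec, dotProduct, Pi.sub_apply, Matrix.mulVec_diagonal]
    simp only [Matrix.mulVec, dotProduct, Matrix.of_apply]
    apply Finset.sum_congr rfl
    intro i _
    rw [Finset.sum_mul, ← Finset.sum_sub_distrib, Finset.mul_sum]
    apply Finset.sum_congr rfl
    intro j _
    ring
  rw [hrhs, sum_pairs (fun i j => w i j * p i * (q i - q j)) (by intro i; simp)]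
  apply Finset.sum_congr rfl; intro i _
  apply Finset.sum_congr rfl; intro j _
  split
  · rw [hsym j i]; ring
  · rfl

/-- **Neyman orthogonality.** With
`π(x) = 1{x∈Ω}·|A|·ℒ†(x)(e_{i₀} − e_{j₀})` and `α_{ij}(x) = π_i(x) − π_j(x)`, for every
`x ∈ Ω` and `h ∈ ℝⁿ`,
`(1/|A|) Σ_{(i,j)∈E(A)} α_{ij}(x) ψ'(θ_i(x) − θ_j(x)) (h_i − h_j) = h_{i₀} − h_{j₀}`. -/
theorem neyman_orthogonality (n : ℕ) {X : Type*} (Ωset : Set X)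
    (A : Matrix (Fin n) (Fin n) ℝ)
    (hA01 : ∀ i j, A i j = 0 ∨ A i j = 1) (hAsym : Aᵀ = A) (hAdiag : ∀ i, A i i = 0)
    (hconn : (SimpleGraph.fromRel (fun i j => A i j = 1)).Connected)
    (θ : Fin n → X → ℝ)
    (L : X → Matrix (Fin n) (Fin n) ℝ)
    (hLdef : ∀ x, L x =
      Matrix.diagonal (fun i => ∑ j, A i j * logisticDeriv (θ i x - θ j x))
        - Matrix.of (fun i j => A i j * logisticDeriv (θ i x - θ j x)))
    (Lp : X → Matrix (Fin n) (Fin n) ℝ) (hLp : ∀ x, IsMoorePenrose (L x) (Lp x))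
    (i₀ j₀ : Fin n)
    (numE : ℝ) (hnumE : numE = ∑ i, ∑ j, if i < j then A i j else 0)
    (π : X → Fin n → ℝ)
    (hπ : ∀ x, π x = (if x ∈ Ωset then (1 : ℝ) else 0) •
      numE • (Lp x *ᵥ (Pi.single i₀ 1 - Pi.single j₀ 1))) :
    ∀ x ∈ Ωset, ∀ h : Fin n → ℝ,
      (1 / numE) * ∑ i, ∑ j,
        (if i < j then
          A i j * (π x i - π x j) * logisticDeriv (θ i x - θ j x) * (h i - h j)
        else 0)
        = h i₀ - h j₀ := by
  intro x hx h
  have hAsym' : ∀ i j, A j i = A i j := fun i j => congrFun (congrFun hAsym i) j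
  by_cases hsub : ∀ i j : Fin n, i = j
  · -- degenerate case: at most one vertex
    have hnlt : ∀ i j : Fin n, ¬ i < j := fun i j hij => hij.ne (hsub i j)
    simp [hnlt, hsub i₀ j₀]
  -- main case
  push_neg at hsub
  obtain ⟨a, b, hab⟩ := hsub
  -- there is an edge (i, j) with i < j
  have hedge : ∃ i j : Fin n, i < j ∧ A i j = 1 := by
    obtain ⟨p⟩ := hconn.preconnected a b
    cases p with
    | nil => exact absurd rfl hab
    | cons hadj _ =>
      rename_i c _
      obtain ⟨hac, hr⟩ := (SimpleGraph.fromRel_adj _ _ _).mp hadj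
      have hAac : A a c = 1 := by rcases hr with hr | hr; exact hr; rw [← hAsym' a c]; exact hr
      rcases lt_or_gt_of_ne hac with hlt | hgt
      · exact ⟨a, c, hlt, hAac⟩
      · exact ⟨c, a, hgt, hAsym' a c ▸ hAac⟩
  -- numE is positive
  have htnn : ∀ i j : Fin n, (0:ℝ) ≤ (if i < j then A i j else 0) := by
    intro i j; split
    · rcases hA01 i j with h0 | h0 <;> simp [h0]
    · exact le_refl 0
  have hone : (1:ℝ) ≤ numE := by
    obtain ⟨i1, j1, hlt, hA1⟩ := hedge
    rw [hnumE]
    calc (1:ℝ) = (if i1 < j1 then A i1 j1 else 0) := by simp [hlt, hA1]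
      _ ≤ ∑ j, if i1 < j then A i1 j else 0 :=
          Finset.single_le_sum (fun j _ => htnn i1 j) (Finset.mem_univ j1)
      _ ≤ ∑ i, ∑ j, if i < j then A i j else 0 :=
          Finset.single_le_sum
            (fun i _ => Finset.sum_nonneg (fun j _ => htnn i j)) (Finset.mem_univ i1)
  have hne : numE ≠ 0 := by linarith
  -- weights
  set w : Fin n → Fin n → ℝ := fun i j => A i j * logisticDeriv (θ i x - θ j x) with hwdef
  have hwsym : ∀ i j, w i j = w j i := by
    intro i j
    simp only [hwdef]
    rw [hAsym' j i, show θ j x - θ i x = -(θ i x - θ j x) by ring, logisticDeriv_neg]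
  have hwnn : ∀ i j, 0 ≤ w i j := by
    intro i j
    rcases hA01 i j with h0 | h1
    · simp [hwdef, h0]
    · simp only [hwdef, h1, one_mul]; exact (logisticDeriv_pos _).le
  set M := L x with hMdef
  set Mp := Lp x with hMpdef
  have hM : M = Matrix.diagonal (fun i => ∑ j, w i j) - Matrix.of w := hLdef x
  -- key bilinear identity
  have key : ∀ p q : Fin n → ℝ,
      ∑ i, ∑ j, (if i < j then w i j * (p i - p j) * (q i - q j) else 0)
        = p ⬝ᵥ (M *ᵥ q) := by
    intro p q
    rw [hM]
    exact laplacian_bilinear w hwsym p q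
  -- L annihilates constants
  have hL1 : M *ᵥ (fun _ => (1:ℝ)) = 0 := by
    rw [hM]
    ext i
    simp [Matrix.sub_mulVec, Matrix.mulVec_diagonal, Matrix.mulVec, dotProduct,
      Matrix.diagonal_apply, Finset.sum_ite_eq]
  have hLsym : Mᵀ = M := by
    rw [hM, Matrix.transpose_sub, Matrix.diagonal_transpose]
    congr 1
    ext i j
    simp only [Matrix.transpose_apply, Matrix.of_apply]
    exact hwsym j i
  -- kernel of L consists of constants
  have hker : ∀ v : Fin n → ℝ, M *ᵥ v = 0 → ∀ i j, v i = v j := by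
    intro v hv
    have hq : ∑ i, ∑ j, (if i < j then w i j * (v i - v j) * (v i - v j) else 0) = 0 := by
      rw [key v v, hv, dotProduct_zero]
    have hterm : ∀ i j : Fin n, i < j → A i j = 1 → v i = v j := by
      intro i j hij hA1
      have hnn : ∀ p ∈ (Finset.univ : Finset (Fin n)),
          (0:ℝ) ≤ ∑ q, (if p < q then w p q * (v p - v q) * (v p - v q) else 0) := by
        intro p _
        apply Finset.sum_nonneg
        intro q _
        split
        · have := hwnn p q
          nlinarith [sq_nonneg (v p - v q)]
        · exact le_refl 0
      have hinner : ∑ q, (if i < q then w i q * (v i - v q) * (v i - v q) else 0) = 0 :=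
        (Finset.sum_eq_zero_iff_of_nonneg hnn).mp hq i (Finset.mem_univ i)
      have hnn2 : ∀ q ∈ (Finset.univ : Finset (Fin n)),
          (0:ℝ) ≤ (if i < q then w i q * (v i - v q) * (v i - v q) else 0) := by
        intro q _
        split
        · have := hwnn i q
          nlinarith [sq_nonneg (v i - v q)]
        · exact le_refl 0
      have h0 : (if i < j then w i j * (v i - v j) * (v i - v j) else 0) = 0 :=
        (Finset.sum_eq_zero_iff_of_nonneg hnn2).mp hinner j (Finset.mem_univ j)
      rw [if_pos hij] at h0
      have hwpos : 0 < w i j := by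
        simp only [hwdef, hA1, one_mul]; exact logisticDeriv_pos _
      have hsq : (v i - v j) * (v i - v j) = 0 := by
        by_contra hc
        have h1 : w i j * ((v i - v j) * (v i - v j)) = 0 := by rw [← mul_assoc]; exact h0
        rcases mul_eq_zero.mp h1 with h' | h'
        · exact hwpos.ne' h'
        · exact hc h'
      have := mul_self_eq_zero.mp hsq
      linarith
    have hadj : ∀ i j : Fin n, A i j = 1 → v i = v j := by
      intro i j hA1
      rcases lt_trichotomy i j with hlt | heq | hgt
      · exact hterm i j hlt hA1
      · rw [heq]
      · exact (hterm j i hgt (hAsym' j i ▸ hA1)).symm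
    intro i j
    obtain ⟨p⟩ := hconn.preconnected i j
    induction p with
    | nil => rfl
    | cons hstep _ ih =>
      rename_i c d _
      obtain ⟨-, hr | hr⟩ := (SimpleGraph.fromRel_adj _ _ _).mp hstep
      · exact (hadj _ _ hr).trans ih
      · exact ((hadj _ _ hr).symm).trans ih
  -- Moore-Penrose facts
  obtain ⟨hp1, hp2, hp3, hp4⟩ := hLp x
  rw [← hMdef, ← hMpdef] at hp1 hp2 hp3 hp4
  set u : Fin n → ℝ := Pi.single i₀ 1 - Pi.single j₀ 1 with hudef
  have hPP : (M * Mp) * (M * Mp) = M * Mp := by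
    rw [← Matrix.mul_assoc, hp1]
  have hvm1 : (fun _ => (1:ℝ)) ᵥ* M = 0 := by
    rw [← Matrix.mulVec_transpose, hLsym]; exact hL1
  have hvmP : (fun _ => (1:ℝ)) ᵥ* (M * Mp) = 0 := by
    rw [← Matrix.vecMul_vecMul, hvm1, Matrix.zero_vecMul]
  have hPu : (M * Mp) *ᵥ u = u := by
    set v := u - (M * Mp) *ᵥ u with hvdef
    have hPv : (M * Mp) *ᵥ v = 0 := by
      rw [hvdef, Matrix.mulVec_sub, Matrix.mulVec_mulVec, hPP, sub_self]
    have hMv : M *ᵥ v = 0 := by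
      calc M *ᵥ v = Mᵀ *ᵥ v := by rw [hLsym]
        _ = v ᵥ* M := Matrix.mulVec_transpose M v
        _ = v ᵥ* (M * Mp * M) := by rw [hp1]
        _ = (v ᵥ* (M * Mp)) ᵥ* M := by rw [Matrix.vecMul_vecMul]
        _ = ((M * Mp)ᵀ *ᵥ v) ᵥ* M := by rw [Matrix.mulVec_transpose]
        _ = 0 ᵥ* M := by rw [hp3, hPv]
        _ = 0 := Matrix.zero_vecMul _
    have hconst := hker v hMv
    have hsumu : ∑ i, u i = 0 := by
      simp [hudef, Pi.single_apply, Finset.sum_sub_distrib, Finset.sum_ite_eq']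
    have hsumPu : ∑ i, ((M * Mp) *ᵥ u) i = 0 := by
      have h1 : (fun _ => (1:ℝ)) ⬝ᵥ ((M * Mp) *ᵥ u) = 0 := by
        rw [Matrix.dotProduct_mulVec, hvmP, zero_dotProduct]
      simpa [dotProduct] using h1
    have hsumv : ∑ i, v i = 0 := by
      simp [hvdef, Finset.sum_sub_distrib, hsumu, hsumPu]
    have hnpos : 0 < n := i₀.pos
    have hv0 : ∀ i, v i = 0 := by
      intro i
      have hs : ∑ j, v j = (n : ℝ) * v i := by
        rw [Finset.sum_congr rfl (fun j _ => hconst j i)]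
        simp [Finset.sum_const, Finset.card_univ, nsmul_eq_mul]
      have hz : (n:ℝ) * v i = 0 := by rw [← hs]; exact hsumv
      rcases mul_eq_zero.mp hz with h' | h'
      · exact absurd h' (Nat.cast_ne_zero.mpr hnpos.ne')
      · exact h'
    have hveq : v = 0 := funext hv0
    rw [hvdef] at hveq
    exact (sub_eq_zero.mp hveq).symm
  have hudot : ∀ g : Fin n → ℝ, u ⬝ᵥ g = g i₀ - g j₀ := by
    intro g
    simp [hudef, dotProduct, Pi.single_apply, sub_mul, Finset.sum_sub_distrib,
      Finset.sum_ite_eq', ite_mul]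
  have hπx : π x = numE • (Mp *ᵥ u) := by rw [hπ x, if_pos hx, one_smul]
  have hS : ∑ i, ∑ j, (if i < j then
        A i j * (π x i - π x j) * logisticDeriv (θ i x - θ j x) * (h i - h j) else 0)
      = (π x) ⬝ᵥ (M *ᵥ h) := by
    rw [← key (π x) h]
    apply Finset.sum_congr rfl; intro i _
    apply Finset.sum_congr rfl; intro j _
    split
    · simp only [hwdef]; ring
    · rfl
  have hdot2 : (Mp *ᵥ u) ⬝ᵥ (M *ᵥ h) = u ⬝ᵥ h := by
    rw [Matrix.dotProduct_mulVec, ← Matrix.mulVec_transpose, hLsym, Matrix.mulVec_mulVec, hPu]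
  rw [hS, hπx, smul_dotProduct, hdot2, hudot h, smul_eq_mul, ← mul_assoc, one_div,
    inv_mul_cancel₀ hne, one_mul]
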